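/- Let α, β be 0-1 vectors of length n. The (n+2)×(n+2) beige skew mirror instance BSM(α,β) is consistent if and only if Σα = Σβ and α^R ⪰ β. -/

import Mathlib

open Finset


/-- Reverse-reindexing of a sum. -/
lemma bsm_revsum (n k : ℕ) (hk : k ≤ n) (f : ℕ → ℕ) :
    ∑ i ∈ Icc 1 k, f (n + 1 - i) = ∑ i ∈ Icc (n + 1 - k) n, f i := by
  apply Finset.sum_nbij' (fun i => n + 1 - i) (fun i => n + 1 - i)
  · intro a ha; simp only [mem_Icc] at *; omega
  · intro a ha; simp only [mem_Icc] at *; omega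
  · intro a ha; simp only [mem_Icc] at ha; omega
  · intro a ha; simp only [mem_Icc] at ha; omega
  · intro a ha; rfl

/-- Splitting off the bottom of an `Icc` sum. -/
lemma bsm_split_bot (a n : ℕ) (h : a ≤ n) (f : ℕ → ℕ) :
    ∑ i ∈ Icc a n, f i = f a + ∑ i ∈ Icc (a+1) n, f i := by
  have : Icc a n = insert a (Icc (a+1) n) := by
    ext x; simp only [mem_insert, mem_Icc]; omega
  rw [this, Finset.sum_insert (by simp only [mem_Icc]; omega)]

lemma bsm_split_top (a n : ℕ) (ha : 1 ≤ a) (h : a ≤ n) (f : ℕ → ℕ) :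
    ∑ i ∈ Icc a n, f i = (∑ i ∈ Icc a (n-1), f i) + f n := by
  have : Icc a n = insert n (Icc a (n-1)) := by
    ext x; simp only [mem_insert, mem_Icc]; omega
  rw [this, Finset.sum_insert (by simp only [mem_Icc]; omega)]
  exact Nat.add_comm _ _

lemma bsm_mono (a b n : ℕ) (h : a ≤ b) (f : ℕ → ℕ) :
    ∑ i ∈ Icc 1 a, f i ≤ ∑ i ∈ Icc 1 b, f i :=
  Finset.sum_le_sum_of_subset (Icc_subset_Icc_right h)

/-- staircase: every value `t ∈ [1, Σβ]` is hit at a unique position with `β j = 1`. -/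
lemma bsm_stair_exists (n : ℕ) (β : ℕ → ℕ) (hβ : ∀ j ∈ Icc 1 n, β j ≤ 1)
    (t : ℕ) (ht1 : 1 ≤ t) (ht2 : t ≤ ∑ j ∈ Icc 1 n, β j) :
    ∃ j ∈ Icc 1 n, β j = 1 ∧ ∑ j' ∈ Icc 1 j, β j' = t := by
  have hP : ∃ m, t ≤ ∑ j' ∈ Icc 1 m, β j' := ⟨n, ht2⟩
  classical
  set j := Nat.find hP with hj
  have hfind : t ≤ ∑ j' ∈ Icc 1 j, β j' := Nat.find_spec hP
  have hjn : j ≤ n := Nat.find_le ht2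
  have hj1 : 1 ≤ j := by
    by_contra h
    have : j = 0 := by omega
    rw [this] at hfind; simp at hfind; omega
  have hprev : ¬ t ≤ ∑ j' ∈ Icc 1 (j-1), β j' := Nat.find_min hP (by omega)
  have hsplit : ∑ j' ∈ Icc 1 j, β j' = (∑ j' ∈ Icc 1 (j-1), β j') + β j :=
    bsm_split_top 1 j le_rfl hj1 β
  have hβj : β j ≤ 1 := hβ j (by simp only [mem_Icc]; omega)
  refine ⟨j, by simp only [mem_Icc]; omega, by omega, by omega⟩

lemma bsm_stair_strict (n : ℕ) (β : ℕ → ℕ)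
    (j j' : ℕ) (hlt : j < j') (hj' : j' ≤ n) (h1' : β j' = 1) :
    ∑ x ∈ Icc 1 j, β x < ∑ x ∈ Icc 1 j', β x := by
  have hs : ∑ x ∈ Icc 1 j', β x = (∑ x ∈ Icc 1 (j'-1), β x) + β j' :=
    bsm_split_top 1 j' le_rfl (by omega) β
  have := bsm_mono j (j'-1) n (by omega) β
  omega

lemma bsm_stair_unique (n : ℕ) (β : ℕ → ℕ)
    (j j' : ℕ) (hj : j ∈ Icc 1 n) (hj' : j' ∈ Icc 1 n)
    (h1 : β j = 1) (h1' : β j' = 1)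
    (he : ∑ x ∈ Icc 1 j, β x = ∑ x ∈ Icc 1 j', β x) : j = j' := by
  simp only [mem_Icc] at hj hj'
  rcases lt_trichotomy j j' with h | h | h
  · exact absurd (bsm_stair_strict n β j j' h hj'.2 h1') (by omega)
  · exact h
  · exact absurd (bsm_stair_strict n β j' j h hj.2 h1) (by omega)

/-- key: given the domination hypothesis, matched pairs satisfy i + j ≥ n+1. -/
lemma bsm_key (n : ℕ) (α β : ℕ → ℕ)
    (hdom : ∀ k ∈ Finset.Icc 1 n,
       ∑ i ∈ Finset.Icc 1 k, β i ≤ ∑ i ∈ Finset.Icc 1 k, α (n - i + 1))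
    (i j : ℕ) (hi : i ∈ Icc 1 n) (hj : j ∈ Icc 1 n) (hαi : α i = 1)
    (he : ∑ x ∈ Icc 1 j, β x = ∑ x ∈ Icc i n, α x) : n + 1 ≤ i + j := by
  simp only [mem_Icc] at hi hj
  have hd := hdom j (by simp only [mem_Icc]; omega)
  have hrev : ∑ x ∈ Icc 1 j, α (n - x + 1) = ∑ x ∈ Icc (n + 1 - j) n, α x := by
    rw [← bsm_revsum n j (by omega) α]
    exact Finset.sum_congr rfl (fun x hx => by
      simp only [mem_Icc] at hx; congr 1; omega)
  by_contra hcon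
  -- then i < n + 1 - j, so Asum i = α i + Asum (i+1) ≥ 1 + Asum (n+1-j)
  have hsplit : ∑ x ∈ Icc i n, α x = α i + ∑ x ∈ Icc (i+1) n, α x :=
    bsm_split_bot i n (by omega) α
  have hmono : ∑ x ∈ Icc (n + 1 - j) n, α x ≤ ∑ x ∈ Icc (i+1) n, α x :=
    Finset.sum_le_sum_of_subset (Icc_subset_Icc_left (by omega))
  omega

lemma bsm_astair_exists (n : ℕ) (α : ℕ → ℕ) (hα : ∀ i ∈ Icc 1 n, α i ≤ 1)
    (t : ℕ) (ht1 : 1 ≤ t) (ht2 : t ≤ ∑ x ∈ Icc 1 n, α x) :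
    ∃ i ∈ Icc 1 n, α i = 1 ∧ ∑ x ∈ Icc i n, α x = t := by
  have hb : ∀ x ∈ Icc 1 n, (fun x => α (n + 1 - x)) x ≤ 1 := by
    intro x hx; simp only [mem_Icc] at hx
    exact hα _ (by simp only [mem_Icc]; omega)
  have hsum : ∑ x ∈ Icc 1 n, α (n + 1 - x) = ∑ x ∈ Icc 1 n, α x := by
    rw [bsm_revsum n n le_rfl α]
    have h1 : n + 1 - n = 1 := by omega
    rw [h1]
  obtain ⟨j, hj, h1, h2⟩ := bsm_stair_exists n (fun x => α (n + 1 - x)) hb t ht1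
    (by simpa [hsum] using ht2)
  simp only [mem_Icc] at hj
  refine ⟨n + 1 - j, by simp only [mem_Icc]; omega, h1, ?_⟩
  rw [← bsm_revsum n j hj.2 α]
  exact h2

lemma bsm_astair_unique (n : ℕ) (α : ℕ → ℕ)
    (i i' : ℕ) (hi : i ∈ Icc 1 n) (hi' : i' ∈ Icc 1 n)
    (h1 : α i = 1) (h1' : α i' = 1)
    (he : ∑ x ∈ Icc i n, α x = ∑ x ∈ Icc i' n, α x) : i = i' := by
  simp only [mem_Icc] at hi hi'
  have key : ∀ m, 1 ≤ m → m ≤ n →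
      ∑ x ∈ Icc 1 (n + 1 - m), (fun x => α (n + 1 - x)) x = ∑ x ∈ Icc m n, α x := by
    intro m hm1 hm2
    rw [bsm_revsum n (n + 1 - m) (by omega) α]
    have h3 : n + 1 - (n + 1 - m) = m := by omega
    rw [h3]
  have e1 : (fun x => α (n + 1 - x)) (n + 1 - i) = 1 := by
    simp only; have : n + 1 - (n + 1 - i) = i := by omega
    rw [this]; exact h1
  have e1' : (fun x => α (n + 1 - x)) (n + 1 - i') = 1 := by
    simp only; have : n + 1 - (n + 1 - i') = i' := by omega
    rw [this]; exact h1'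
  have := bsm_stair_unique n (fun x => α (n + 1 - x)) (n + 1 - i) (n + 1 - i')
    (by simp only [mem_Icc]; omega) (by simp only [mem_Icc]; omega) e1 e1'
    (by rw [key i hi.1 hi.2, key i' hi'.1 hi'.2]; exact he)
  omega

def bsmT (n : ℕ) (α β : ℕ → ℕ) (i j : ℕ) : ℕ :=
  if i ≤ n ∧ j ≤ n ∧ α i = 1 ∧ β j = 1 ∧
      (∑ x ∈ Icc 1 j, β x) = (∑ x ∈ Icc i n, α x) then 0
  else if n + 1 ≤ i + j then 2 else 0

lemma bsmT_eq_two (n : ℕ) (α β : ℕ → ℕ) (i j : ℕ) :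
    bsmT n α β i j = 2 ↔ (n + 1 ≤ i + j ∧
      ¬ (i ≤ n ∧ j ≤ n ∧ α i = 1 ∧ β j = 1 ∧
        (∑ x ∈ Icc 1 j, β x) = (∑ x ∈ Icc i n, α x))) := by
  unfold bsmT
  split_ifs with h1 h2 <;> simp_all

lemma bsmT_le (n : ℕ) (α β : ℕ → ℕ) (i j : ℕ) : bsmT n α β i j ≤ 3 := by
  unfold bsmT; split_ifs <;> omega

lemma bsmT_ne_one (n : ℕ) (α β : ℕ → ℕ) (i j : ℕ) : bsmT n α β i j ≠ 1 := by
  unfold bsmT; split_ifs <;> omega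

lemma bsmT_ne_three (n : ℕ) (α β : ℕ → ℕ) (i j : ℕ) : bsmT n α β i j ≠ 3 := by
  unfold bsmT; split_ifs <;> omega

lemma bsm_row (n : ℕ) (α β : ℕ → ℕ)
    (hα : ∀ i ∈ Icc 1 n, α i ≤ 1) (hβ : ∀ i ∈ Icc 1 n, β i ≤ 1)
    (hsums : ∑ i ∈ Icc 1 n, α i = ∑ i ∈ Icc 1 n, β i)
    (hdom : ∀ k ∈ Finset.Icc 1 n,
       ∑ i ∈ Finset.Icc 1 k, β i ≤ ∑ i ∈ Finset.Icc 1 k, α (n - i + 1))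
    (i : ℕ) (hi : i ∈ Icc 1 (n+2)) :
    ((Icc 1 (n+2)).filter (fun j => bsmT n α β i j = 2)).card
      = if i ≤ n then i - α i + 2 else n + 2 := by
  simp only [mem_Icc] at hi
  by_cases hin : i ≤ n
  · rw [if_pos hin]
    set M : ℕ → Prop := fun j => i ≤ n ∧ j ≤ n ∧ α i = 1 ∧ β j = 1 ∧
        (∑ x ∈ Icc 1 j, β x) = (∑ x ∈ Icc i n, α x) with hM
    have hfe : (Icc 1 (n+2)).filter (fun j => bsmT n α β i j = 2)
        = (Icc (n+1-i) (n+2)).filter (fun j => ¬ M j) := by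
      ext j
      simp only [mem_filter, mem_Icc, bsmT_eq_two, hM]
      constructor
      · rintro ⟨⟨hj1, hj2⟩, hr, hm⟩; exact ⟨⟨by omega, hj2⟩, hm⟩
      · rintro ⟨⟨hj1, hj2⟩, hm⟩; exact ⟨⟨by omega, hj2⟩, by omega, hm⟩
    rw [hfe]
    have hcards := Finset.card_filter_add_card_filter_not
      (s := Icc (n+1-i) (n+2)) (p := M)
    have hscard : (Icc (n+1-i) (n+2)).card = i + 2 := by
      rw [Nat.card_Icc]; omega
    have hαi : α i ≤ 1 := hα i (by simp only [mem_Icc]; omega)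
    have hmc : ((Icc (n+1-i) (n+2)).filter M).card = α i := by
      by_cases hai : α i = 1
      · -- exactly one matched column
        have ht1 : 1 ≤ ∑ x ∈ Icc i n, α x := by
          have := bsm_split_bot i n hin α
          omega
        have ht2 : ∑ x ∈ Icc i n, α x ≤ ∑ x ∈ Icc 1 n, β x := by
          rw [← hsums]
          exact Finset.sum_le_sum_of_subset (Icc_subset_Icc_left (by omega))
        obtain ⟨j₀, hj₀, hb₀, hs₀⟩ := bsm_stair_exists n β hβ _ ht1 ht2
        have hkey := bsm_key n α β hdom i j₀
          (by simp only [mem_Icc]; omega) hj₀ hai hs₀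
        simp only [mem_Icc] at hj₀
        have : (Icc (n+1-i) (n+2)).filter M = {j₀} := by
          apply Finset.eq_singleton_iff_unique_mem.mpr
          constructor
          · simp only [mem_filter, mem_Icc, hM]
            exact ⟨⟨by omega, by omega⟩, hin, by omega, hai, hb₀, hs₀⟩
          · intro j hj
            simp only [mem_filter, mem_Icc, hM] at hj
            obtain ⟨⟨hj1, hj2⟩, _, hjn, _, hbj, hsj⟩ := hj
            exact bsm_stair_unique n β j j₀
              (by simp only [mem_Icc]; omega) (by simp only [mem_Icc]; omega)
              hbj hb₀ (by rw [hsj, hs₀])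
        rw [this, hai]; rfl
      · have h0 : (Icc (n+1-i) (n+2)).filter M = ∅ :=
          Finset.filter_eq_empty_iff.mpr (fun j _ hm => hai hm.2.2.1)
        rw [h0]
        simp only [Finset.card_empty]
        omega
    omega
  · rw [if_neg hin]
    have hall : ∀ j ∈ Icc 1 (n+2), bsmT n α β i j = 2 := by
      intro j hj
      simp only [mem_Icc] at hj
      rw [bsmT_eq_two]
      exact ⟨by omega, fun h => hin h.1⟩
    rw [Finset.filter_true_of_mem hall, Nat.card_Icc]
    omega

lemma bsm_col (n : ℕ) (α β : ℕ → ℕ)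
    (hα : ∀ i ∈ Icc 1 n, α i ≤ 1) (hβ : ∀ i ∈ Icc 1 n, β i ≤ 1)
    (hsums : ∑ i ∈ Icc 1 n, α i = ∑ i ∈ Icc 1 n, β i)
    (hdom : ∀ k ∈ Finset.Icc 1 n,
       ∑ i ∈ Finset.Icc 1 k, β i ≤ ∑ i ∈ Finset.Icc 1 k, α (n - i + 1))
    (j : ℕ) (hj : j ∈ Icc 1 (n+2)) :
    ((Icc 1 (n+2)).filter (fun i => bsmT n α β i j = 2)).card
      = if j ≤ n then j - β j + 2 else n + 2 := by
  simp only [mem_Icc] at hj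
  by_cases hjn : j ≤ n
  · rw [if_pos hjn]
    set M : ℕ → Prop := fun i => i ≤ n ∧ j ≤ n ∧ α i = 1 ∧ β j = 1 ∧
        (∑ x ∈ Icc 1 j, β x) = (∑ x ∈ Icc i n, α x) with hM
    have hfe : (Icc 1 (n+2)).filter (fun i => bsmT n α β i j = 2)
        = (Icc (n+1-j) (n+2)).filter (fun i => ¬ M i) := by
      ext i
      simp only [mem_filter, mem_Icc, bsmT_eq_two, hM]
      constructor
      · rintro ⟨⟨hi1, hi2⟩, hr, hm⟩; exact ⟨⟨by omega, hi2⟩, hm⟩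
      · rintro ⟨⟨hi1, hi2⟩, hm⟩; exact ⟨⟨by omega, hi2⟩, by omega, hm⟩
    rw [hfe]
    have hcards := Finset.card_filter_add_card_filter_not
      (s := Icc (n+1-j) (n+2)) (p := M)
    have hscard : (Icc (n+1-j) (n+2)).card = j + 2 := by
      rw [Nat.card_Icc]; omega
    have hβj : β j ≤ 1 := hβ j (by simp only [mem_Icc]; omega)
    have hmc : ((Icc (n+1-j) (n+2)).filter M).card = β j := by
      by_cases hbj : β j = 1
      · have ht1 : 1 ≤ ∑ x ∈ Icc 1 j, β x := by
          have := bsm_split_top 1 j le_rfl (by omega) β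
          omega
        have ht2 : ∑ x ∈ Icc 1 j, β x ≤ ∑ x ∈ Icc 1 n, α x := by
          rw [hsums]
          exact bsm_mono j n n hjn β
        obtain ⟨i₀, hi₀, ha₀, hs₀⟩ := bsm_astair_exists n α hα _ ht1 ht2
        have hkey := bsm_key n α β hdom i₀ j hi₀
          (by simp only [mem_Icc]; omega) ha₀ hs₀.symm
        simp only [mem_Icc] at hi₀
        have : (Icc (n+1-j) (n+2)).filter M = {i₀} := by
          apply Finset.eq_singleton_iff_unique_mem.mpr
          constructor
          · simp only [mem_filter, mem_Icc, hM]
            exact ⟨⟨by omega, by omega⟩, by omega, hjn, ha₀, hbj, hs₀.symm⟩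
          · intro i hi
            simp only [mem_filter, mem_Icc, hM] at hi
            obtain ⟨⟨hi1, hi2⟩, hin, _, hαi, _, hsi⟩ := hi
            exact bsm_astair_unique n α i i₀
              (by simp only [mem_Icc]; omega) (by simp only [mem_Icc]; omega)
              hαi ha₀ (by rw [← hsi, hs₀])
        rw [this, hbj]; rfl
      · have h0 : (Icc (n+1-j) (n+2)).filter M = ∅ :=
          Finset.filter_eq_empty_iff.mpr (fun i _ hm => hbj hm.2.2.2.1)
        rw [h0]
        simp only [Finset.card_empty]
        omega
    omega
  · rw [if_neg hjn]
    have hall : ∀ i ∈ Icc 1 (n+2), bsmT n α β i j = 2 := by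
      intro i hi
      simp only [mem_Icc] at hi
      rw [bsmT_eq_two]
      exact ⟨by omega, fun h => hjn h.2.1⟩
    rw [Finset.filter_true_of_mem hall, Nat.card_Icc]
    omega

theorem stmt_18' (n : ℕ) (α β : ℕ → ℕ)
    (hα : ∀ i ∈ Finset.Icc 1 n, α i ≤ 1)
    (hβ : ∀ i ∈ Finset.Icc 1 n, β i ≤ 1)
    (xB yB : ℕ → ℕ)
    (hxB : ∀ i ∈ Finset.Icc 1 (n+2), xB i =
      if i ≤ n then i - α i + 2 else n + 2)
    (hyB : ∀ i ∈ Finset.Icc 1 (n+2), yB i =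
      if i ≤ n then i - β i + 2 else n + 2) :
    (∃ T : ℕ → ℕ → ℕ,
      (∀ i ∈ Finset.Icc 1 (n+2), ∀ j ∈ Finset.Icc 1 (n+2), T i j ≤ 3) ∧
      (∀ i ∈ Finset.Icc 1 (n+2),
        ((Finset.Icc 1 (n+2)).filter (fun j => T i j = 2)).card = xB i) ∧
      (∀ j ∈ Finset.Icc 1 (n+2),
        ((Finset.Icc 1 (n+2)).filter (fun i => T i j = 2)).card = yB j) ∧
      (∀ i ∈ Finset.Icc 1 (n+2),
        ((Finset.Icc 1 (n+2)).filter (fun j => T i j = 1)).card = 0) ∧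
      (∀ j ∈ Finset.Icc 1 (n+2),
        ((Finset.Icc 1 (n+2)).filter (fun i => T i j = 1)).card = 0) ∧
      (∀ i ∈ Finset.Icc 1 (n+2),
        ((Finset.Icc 1 (n+2)).filter (fun j => T i j = 3)).card = 0) ∧
      (∀ j ∈ Finset.Icc 1 (n+2),
        ((Finset.Icc 1 (n+2)).filter (fun i => T i j = 3)).card = 0)) ↔
    ((∑ i ∈ Finset.Icc 1 n, α i = ∑ i ∈ Finset.Icc 1 n, β i) ∧
     (∀ k ∈ Finset.Icc 1 n,
       ∑ i ∈ Finset.Icc 1 k, β i ≤ ∑ i ∈ Finset.Icc 1 k, α (n - i + 1))) := by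
  have split2 : ∀ f : ℕ → ℕ, ∑ i ∈ Icc 1 (n+2), f i
      = (∑ i ∈ Icc 1 n, f i) + f (n+1) + f (n+2) := by
    intro f
    rw [bsm_split_top 1 (n+2) le_rfl (by omega) f]
    rw [show n+2-1 = n+1 from by omega]
    rw [bsm_split_top 1 (n+1) le_rfl (by omega) f]
    rw [show n+1-1 = n from by omega]
  constructor
  · rintro ⟨T, -, hrow, hcol, -, -, -, -⟩
    have hdouble : ∑ i ∈ Icc 1 (n+2), ((Icc 1 (n+2)).filter (fun j => T i j = 2)).card
        = ∑ j ∈ Icc 1 (n+2), ((Icc 1 (n+2)).filter (fun i => T i j = 2)).card := by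
      simp only [Finset.card_filter]
      exact Finset.sum_comm
    have hx : ∑ i ∈ Icc 1 (n+2), xB i
        = ∑ i ∈ Icc 1 (n+2), ((Icc 1 (n+2)).filter (fun j => T i j = 2)).card :=
      Finset.sum_congr rfl (fun i hi => (hrow i hi).symm)
    have hy : ∑ j ∈ Icc 1 (n+2), yB j
        = ∑ j ∈ Icc 1 (n+2), ((Icc 1 (n+2)).filter (fun i => T i j = 2)).card :=
      Finset.sum_congr rfl (fun j hj => (hcol j hj).symm)
    have hx2 : ∑ i ∈ Icc 1 (n+2), xB i = (∑ i ∈ Icc 1 n, (i - α i + 2)) + (n+2) + (n+2) := by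
      rw [split2 xB,
        hxB (n+1) (by simp only [mem_Icc]; omega), if_neg (by omega),
        hxB (n+2) (by simp only [mem_Icc]; omega), if_neg (by omega)]
      congr 2
      exact Finset.sum_congr rfl (fun i hi => by
        simp only [mem_Icc] at hi
        rw [hxB i (by simp only [mem_Icc]; omega), if_pos (by omega)])
    have hy2 : ∑ j ∈ Icc 1 (n+2), yB j = (∑ j ∈ Icc 1 n, (j - β j + 2)) + (n+2) + (n+2) := by
      rw [split2 yB,
        hyB (n+1) (by simp only [mem_Icc]; omega), if_neg (by omega),
        hyB (n+2) (by simp only [mem_Icc]; omega), if_neg (by omega)]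
      congr 2
      exact Finset.sum_congr rfl (fun j hj => by
        simp only [mem_Icc] at hj
        rw [hyB j (by simp only [mem_Icc]; omega), if_pos (by omega)])
    have hxa : (∑ i ∈ Icc 1 n, (i - α i + 2)) + ∑ i ∈ Icc 1 n, α i
        = ∑ i ∈ Icc 1 n, (i+2) := by
      rw [← Finset.sum_add_distrib]
      exact Finset.sum_congr rfl (fun i hi => by
        have := hα i hi; simp only [mem_Icc] at hi; omega)
    have hyb : (∑ j ∈ Icc 1 n, (j - β j + 2)) + ∑ j ∈ Icc 1 n, β j
        = ∑ j ∈ Icc 1 n, (j+2) := by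
      rw [← Finset.sum_add_distrib]
      exact Finset.sum_congr rfl (fun j hj => by
        have := hβ j hj; simp only [mem_Icc] at hj; omega)
    refine ⟨by omega, ?_⟩
    intro k hk
    simp only [mem_Icc] at hk
    have hN : ∑ j ∈ Icc 1 k, yB j
        = ∑ i ∈ Icc 1 (n+2), ((Icc 1 k).filter (fun j => T i j = 2)).card := by
      rw [Finset.sum_congr rfl (fun j hj => by
        simp only [mem_Icc] at hj
        exact (hcol j (by simp only [mem_Icc]; omega)).symm)]
      simp only [Finset.card_filter]
      exact Finset.sum_comm
    have hrowbd : ∀ i ∈ Icc 1 (n+2),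
        xB i ≤ ((Icc 1 k).filter (fun j => T i j = 2)).card + (n+2-k) := by
      intro i hi
      have hsplit : (Icc 1 (n+2)).filter (fun j => T i j = 2)
          = ((Icc 1 k).filter (fun j => T i j = 2))
            ∪ ((Icc (k+1) (n+2)).filter (fun j => T i j = 2)) := by
        rw [← Finset.filter_union]
        congr 1
        ext x; simp only [mem_union, mem_Icc]; omega
      have h1 := hrow i hi
      have h2 := Finset.card_union_le ((Icc 1 k).filter (fun j => T i j = 2))
        ((Icc (k+1) (n+2)).filter (fun j => T i j = 2))
      have h3 : ((Icc (k+1) (n+2)).filter (fun j => T i j = 2)).card ≤ n+2-k := by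
        calc ((Icc (k+1) (n+2)).filter (fun j => T i j = 2)).card
            ≤ (Icc (k+1) (n+2)).card := Finset.card_filter_le _ _
          _ = n+2-k := by rw [Nat.card_Icc]; omega
      rw [← h1, hsplit]
      omega
    have hsub : ∑ i ∈ Icc (n+1-k) (n+2), xB i
        ≤ (∑ i ∈ Icc (n+1-k) (n+2), ((Icc 1 k).filter (fun j => T i j = 2)).card)
          + (k+2) * (n+2-k) := by
      calc ∑ i ∈ Icc (n+1-k) (n+2), xB i
          ≤ ∑ i ∈ Icc (n+1-k) (n+2),
              (((Icc 1 k).filter (fun j => T i j = 2)).card + (n+2-k)) :=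
            Finset.sum_le_sum (fun i hi => hrowbd i (by
              simp only [mem_Icc] at *; omega))
        _ = _ := by
            rw [Finset.sum_add_distrib, Finset.sum_const, Nat.card_Icc, smul_eq_mul]
            congr 2
            omega
    have hle : ∑ i ∈ Icc (n+1-k) (n+2), ((Icc 1 k).filter (fun j => T i j = 2)).card
        ≤ ∑ i ∈ Icc 1 (n+2), ((Icc 1 k).filter (fun j => T i j = 2)).card :=
      Finset.sum_le_sum_of_subset (Icc_subset_Icc (by omega) le_rfl)
    have hsplitI : ∑ i ∈ Icc (n+1-k) (n+2), xB i
        = (∑ i ∈ Icc (n+1-k) n, (i - α i + 2)) + (n+2) + (n+2) := by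
      rw [bsm_split_top (n+1-k) (n+2) (by omega) (by omega) xB]
      rw [show n+2-1 = n+1 from by omega]
      rw [bsm_split_top (n+1-k) (n+1) (by omega) (by omega) xB]
      rw [show n+1-1 = n from by omega]
      rw [hxB (n+1) (by simp only [mem_Icc]; omega), if_neg (by omega),
          hxB (n+2) (by simp only [mem_Icc]; omega), if_neg (by omega)]
      congr 2
      exact Finset.sum_congr rfl (fun i hi => by
        simp only [mem_Icc] at hi
        rw [hxB i (by simp only [mem_Icc]; omega), if_pos (by omega)])
    have hY : ∑ j ∈ Icc 1 k, yB j = ∑ j ∈ Icc 1 k, (j - β j + 2) :=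
      Finset.sum_congr rfl (fun j hj => by
        simp only [mem_Icc] at hj
        rw [hyB j (by simp only [mem_Icc]; omega), if_pos (by omega)])
    have h1 : (∑ i ∈ Icc (n+1-k) n, (i - α i + 2)) + (∑ i ∈ Icc (n+1-k) n, α i)
        = ∑ i ∈ Icc (n+1-k) n, (i+2) := by
      rw [← Finset.sum_add_distrib]
      refine Finset.sum_congr rfl (fun i hi => ?_)
      simp only [mem_Icc] at hi
      have := hα i (by simp only [mem_Icc]; omega)
      omega
    have h2 : (∑ j ∈ Icc 1 k, (j - β j + 2)) + (∑ j ∈ Icc 1 k, β j)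
        = ∑ j ∈ Icc 1 k, (j+2) := by
      rw [← Finset.sum_add_distrib]
      refine Finset.sum_congr rfl (fun j hj => ?_)
      simp only [mem_Icc] at hj
      have := hβ j (by simp only [mem_Icc]; omega)
      omega
    have h3 : ∑ i ∈ Icc (n+1-k) n, (i+2) = (∑ j ∈ Icc 1 k, (j+2)) + k * (n-k) := by
      have ha := bsm_revsum n k hk.2 (fun i => i + 2)
      rw [← ha]
      have hb := bsm_revsum k k le_rfl (fun j => (n+1-j) + 2)
      rw [show k+1-k = 1 from by omega] at hb
      rw [← hb]
      rw [show (∑ i ∈ Icc 1 k, ((n+1-(k+1-i)) + 2)) = ∑ i ∈ Icc 1 k, ((i+2) + (n-k)) from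
        Finset.sum_congr rfl (fun i hi => by simp only [mem_Icc] at hi; omega)]
      rw [Finset.sum_add_distrib, Finset.sum_const, Nat.card_Icc, smul_eq_mul]
      congr 2
    have h4 : (k+2) * (n+2-k) = k*(n-k) + 2*(n+2) := by
      obtain ⟨m, rfl⟩ : ∃ m, n = k + m := ⟨n - k, by omega⟩
      rw [show k + m - k = m from by omega, show k + m + 2 - k = m + 2 from by omega]
      ring
    have hgoal : ∑ i ∈ Icc 1 k, α (n - i + 1) = ∑ i ∈ Icc (n+1-k) n, α i := by
      rw [← bsm_revsum n k hk.2 α]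
      exact Finset.sum_congr rfl (fun i hi => by
        simp only [mem_Icc] at hi; congr 1; omega)
    rw [hgoal]
    rw [h4] at hsub
    generalize k * (n - k) = a at hsub h3
    omega
  · rintro ⟨hsums, hdom⟩
    refine ⟨bsmT n α β, ?_, ?_, ?_, ?_, ?_, ?_, ?_⟩
    · intro i _ j _; exact bsmT_le n α β i j
    · intro i hi
      rw [bsm_row n α β hα hβ hsums hdom i hi, hxB i hi]
    · intro j hj
      rw [bsm_col n α β hα hβ hsums hdom j hj, hyB j hj]
    · intro i _
      rw [Finset.card_eq_zero, Finset.filter_eq_empty_iff]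
      exact fun j _ => bsmT_ne_one n α β i j
    · intro j _
      rw [Finset.card_eq_zero, Finset.filter_eq_empty_iff]
      exact fun i _ => bsmT_ne_one n α β i j
    · intro i _
      rw [Finset.card_eq_zero, Finset.filter_eq_empty_iff]
      exact fun j _ => bsmT_ne_three n α β i j
    · intro j _
      rw [Finset.card_eq_zero, Finset.filter_eq_empty_iff]
      exact fun i _ => bsmT_ne_three n α β i j

/-- Let α, β be 0-1 vectors of length n. The (n+2)×(n+2) beige
skew mirror instance BSM(α,β) of 3-CCP is consistent iff Σα = Σβ and
α^R ⪰ β. Colors: 1 = azure, 2 = beige, 3 = cyan, 0 = blank. Beige sums: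
x^B_i = i − α_i + 2, y^B_i = i − β_i + 2 for i ≤ n, and n+2 for
i = n+1, n+2; azure and cyan sums are zero. -/
theorem stmt_18 (n : ℕ) (α β : ℕ → ℕ)
    (hα : ∀ i ∈ Finset.Icc 1 n, α i ≤ 1)
    (hβ : ∀ i ∈ Finset.Icc 1 n, β i ≤ 1)
    (xB yB : ℕ → ℕ)
    (hxB : ∀ i ∈ Finset.Icc 1 (n+2), xB i =
      if i ≤ n then i - α i + 2 else n + 2)
    (hyB : ∀ i ∈ Finset.Icc 1 (n+2), yB i =
      if i ≤ n then i - β i + 2 else n + 2) :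
    (∃ T : ℕ → ℕ → ℕ,
      (∀ i ∈ Finset.Icc 1 (n+2), ∀ j ∈ Finset.Icc 1 (n+2), T i j ≤ 3) ∧
      (∀ i ∈ Finset.Icc 1 (n+2),
        ((Finset.Icc 1 (n+2)).filter (fun j => T i j = 2)).card = xB i) ∧
      (∀ j ∈ Finset.Icc 1 (n+2),
        ((Finset.Icc 1 (n+2)).filter (fun i => T i j = 2)).card = yB j) ∧
      (∀ i ∈ Finset.Icc 1 (n+2),
        ((Finset.Icc 1 (n+2)).filter (fun j => T i j = 1)).card = 0) ∧
      (∀ j ∈ Finset.Icc 1 (n+2),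
        ((Finset.Icc 1 (n+2)).filter (fun i => T i j = 1)).card = 0) ∧
      (∀ i ∈ Finset.Icc 1 (n+2),
        ((Finset.Icc 1 (n+2)).filter (fun j => T i j = 3)).card = 0) ∧
      (∀ j ∈ Finset.Icc 1 (n+2),
        ((Finset.Icc 1 (n+2)).filter (fun i => T i j = 3)).card = 0)) ↔
    ((∑ i ∈ Finset.Icc 1 n, α i = ∑ i ∈ Finset.Icc 1 n, β i) ∧
     (∀ k ∈ Finset.Icc 1 n,
       ∑ i ∈ Finset.Icc 1 k, β i ≤ ∑ i ∈ Finset.Icc 1 k, α (n - i + 1))) :=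
  stmt_18' n α β hα hβ xB yB hxB hyB
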